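/- arXiv:2408.08598 — 3 statements merged into one kernel-verified Lean document; each statement's English description precedes it below -/
import Mathlib

section
/- Let G be a finite simple graph. If G contains an even core W such that the induced subgraph G[W] has an odd number of edges, then b_2(G) > r_2(G)/2, i.e., b_2(G) ≥ r_2(G)/2 + 1. -/
open Finset

/-- The number of bicliques in the collection `f` that cover the pair `(u, v)`. -/
noncomputable def coversCount {V : Type*} {m : ℕ} (f : Fin m → Finset V × Finset V) (u v : V) : ℕ :=
  Nat.card {i : Fin m // (u ∈ (f i).1 ∧ v ∈ (f i).2) ∨ (u ∈ (f i).2 ∧ v ∈ (f i).1)}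

/-- `f` is an odd cover of `G`: a collection of bicliques (pairs of disjoint finite sets of
vertices) covering each edge of `G` an odd number of times and each nonedge an even number
of times. -/
def IsOddCover {V : Type*} (G : SimpleGraph V) {m : ℕ}
    (f : Fin m → Finset V × Finset V) : Prop :=
  (∀ i, Disjoint (f i).1 (f i).2) ∧
  ∀ u v : V, u ≠ v → (G.Adj u v ↔ Odd (coversCount f u v))

/-- `b2 G` is the minimum cardinality of an odd cover of `G`. -/
noncomputable def b2 {V : Type*} (G : SimpleGraph V) : ℕ :=
  sInf {m : ℕ | ∃ f : Fin m → Finset V × Finset V, IsOddCover G f}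

/-- `r2 G` is the rank over `𝔽₂` of the adjacency matrix of `G`. -/
noncomputable def r2 {V : Type*} [Fintype V] (G : SimpleGraph V) : ℕ :=
  letI := Classical.decRel G.Adj
  (SimpleGraph.adjMatrix (ZMod 2) G).rank

/-- Disjoint union of an indexed family of graphs, on the sigma type of the vertex types. -/
def sigmaSum {ι : Type*} {α : ι → Type*} (G : (i : ι) → SimpleGraph (α i)) :
    SimpleGraph ((i : ι) × α i) where
  Adj x y := ∃ (i : ι) (a b : α i), (G i).Adj a b ∧ x = ⟨i, a⟩ ∧ y = ⟨i, b⟩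
  symm := by constructor; rintro x y ⟨i, a, b, h, rfl, rfl⟩; exact ⟨i, b, a, h.symm, rfl, rfl⟩
  loopless := by
    constructor
    rintro x ⟨i, a, b, h, rfl, h2⟩
    obtain ⟨-, h3⟩ := Sigma.mk.inj_iff.mp h2
    exact (G i).loopless.irrefl a (by cases h3; exact h)

/- ### Auxiliary lemmas -/

lemma zmod2_odd {n : ℕ} (h : Odd n) : (n : ZMod 2) = 1 := by
  rw [← ZMod.natCast_mod, Nat.odd_iff.mp h]; rfl

lemma zmod2_even {n : ℕ} (h : Even n) : (n : ZMod 2) = 0 := by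
  rw [← ZMod.natCast_mod, Nat.even_iff.mp h]; rfl

lemma coversCount_eq_card {V : Type*} [DecidableEq V] {m : ℕ}
    (f : Fin m → Finset V × Finset V) (u v : V) :
    coversCount f u v = (Finset.univ.filter (fun i =>
      (u ∈ (f i).1 ∧ v ∈ (f i).2) ∨ (u ∈ (f i).2 ∧ v ∈ (f i).1))).card := by
  rw [coversCount, Nat.card_eq_fintype_card, Fintype.card_subtype]

/-- Indicator function of a finite set, with values in `ZMod 2`. -/
def indF {V : Type*} [DecidableEq V] (s : Finset V) : V → ZMod 2 :=
  fun v => if v ∈ s then 1 else 0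

lemma indF_apply {V : Type*} [DecidableEq V] (s : Finset V) (v : V) :
    indF s v = if v ∈ s then 1 else 0 := rfl

lemma aux_ite {p1 p2 p3 p4 : Prop} [Decidable p1] [Decidable p2] [Decidable p3] [Decidable p4]
    (hu : ¬ (p1 ∧ p2)) :
    (if p1 then (1 : ZMod 2) else 0) * (if p4 then 1 else 0) +
      (if p2 then 1 else 0) * (if p3 then 1 else 0)
    = if (p1 ∧ p4) ∨ (p2 ∧ p3) then 1 else 0 := by
  by_cases h1 : p1 <;> by_cases h2 : p2 <;> by_cases h3 : p3 <;> by_cases h4 : p4 <;> simp_all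

/-- Every finite graph has an odd cover: take each edge as a biclique. -/
lemma exists_oddCover {V : Type*} [Fintype V] [DecidableEq V] (G : SimpleGraph V)
    [DecidableRel G.Adj] :
    ∃ (m : ℕ) (f : Fin m → Finset V × Finset V), IsOddCover G f := by
  set E := G.edgeFinset with hE
  let ep : Fin E.card → Sym2 V := fun i => (E.equivFin.symm i : Sym2 V)
  have hep_mem : ∀ i, ep i ∈ G.edgeSet := fun i =>
    SimpleGraph.mem_edgeFinset.mp (E.equivFin.symm i).2
  have hout : ∀ i, Sym2.mk (ep i).out.1 (ep i).out.2 = ep i := fun i => Quot.out_eq _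
  refine ⟨E.card, fun i => ({(ep i).out.1}, {(ep i).out.2}), fun i => ?_, fun u v huv => ?_⟩
  · rw [Finset.disjoint_singleton]
    intro h
    have hdiag : (ep i).IsDiag := by
      rw [← hout i, Sym2.mk_isDiag_iff]
      exact h
    exact (SimpleGraph.not_isDiag_of_mem_edgeSet G (hep_mem i)) hdiag
  · have key1 : ∀ i, ((u ∈ ({(ep i).out.1} : Finset V) ∧ v ∈ ({(ep i).out.2} : Finset V)) ∨
        (u ∈ ({(ep i).out.2} : Finset V) ∧ v ∈ ({(ep i).out.1} : Finset V))) ↔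
        ep i = Sym2.mk u v := by
      intro i
      simp only [Finset.mem_singleton]
      constructor
      · rintro (⟨rfl, rfl⟩ | ⟨rfl, rfl⟩)
        · exact (hout i).symm
        · rw [Sym2.eq_swap]; exact (hout i).symm
      · intro h
        have h2 : Sym2.mk (ep i).out.1 (ep i).out.2 = Sym2.mk u v := by rw [hout i, h]
        rcases (Sym2.mk_eq_mk_iff (p := (ep i).out) (q := (u, v))).mp h2 with h' | h'
        · left; rw [h']; exact ⟨rfl, rfl⟩
        · right; rw [h']; exact ⟨rfl, rfl⟩
    have hcc : coversCount (fun i => (({(ep i).out.1}, {(ep i).out.2}) : Finset V × Finset V)) u v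
        = Nat.card {i // ep i = Sym2.mk u v} :=
      Nat.card_congr (Equiv.subtypeEquivRight key1)
    by_cases hadj : G.Adj u v
    · have hmem : Sym2.mk u v ∈ E := by
        rw [hE, SimpleGraph.mem_edgeFinset, SimpleGraph.mem_edgeSet]
        exact hadj
      haveI : Unique {i // ep i = Sym2.mk u v} := {
        default := ⟨E.equivFin ⟨_, hmem⟩, by
          show ((E.equivFin.symm (E.equivFin ⟨_, hmem⟩)) : Sym2 V) = Sym2.mk u v
          rw [Equiv.symm_apply_apply]⟩
        uniq := by
          rintro ⟨i, hi⟩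
          apply Subtype.ext
          show i = E.equivFin ⟨_, hmem⟩
          rw [← Equiv.symm_apply_eq]
          exact Subtype.ext hi }
      simp only [hadj, true_iff, hcc, Nat.card_unique]
      exact odd_one
    · haveI : IsEmpty {i // ep i = Sym2.mk u v} := ⟨by
        rintro ⟨i, hi⟩
        exact hadj (by rw [← SimpleGraph.mem_edgeSet, ← hi]; exact hep_mem i)⟩
      simp only [hadj, false_iff, hcc, Nat.card_of_isEmpty]
      exact (by decide : ¬ Odd 0)

open Matrix in
/-- The key lemma: under the even-core + odd-edge-count hypothesis, every odd cover of size `m`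
satisfies `rank + 1 ≤ 2 m`. -/
lemma key_lemma {V : Type*} [Fintype V] [DecidableEq V] (G : SimpleGraph V)
    [DecidableRel G.Adj] (W : Finset V)
    (hcore : ∀ v : V, Even (Nat.card {w : V // w ∈ W ∧ G.Adj v w}))
    (hodd : Odd (Nat.card {e : Sym2 V // e ∈ G.edgeSet ∧ ∀ v ∈ e, v ∈ W}))
    {m : ℕ} (f : Fin m → Finset V × Finset V) (hf : IsOddCover G f) :
    (SimpleGraph.adjMatrix (ZMod 2) G).rank + 1 ≤ 2 * m := by
  obtain ⟨hdisj, hcov⟩ := hf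
  set A := SimpleGraph.adjMatrix (ZMod 2) G with hAdef
  set x : Fin m → V → ZMod 2 := fun i => indF (f i).1 with hx
  set y : Fin m → V → ZMod 2 := fun i => indF (f i).2 with hy
  set w : V → ZMod 2 := indF W with hw
  have hxy0 : ∀ i v, x i v * y i v = 0 := by
    intro i v
    by_cases h1 : v ∈ (f i).1
    · have h2 : v ∉ (f i).2 := fun h2 => (Finset.disjoint_left.mp (hdisj i) h1) h2
      simp [hx, hy, indF, h1, h2]
    · simp [hx, indF, h1]
  -- entrywise expansion of the adjacency matrix
  have hA' : ∀ u v : V, A u v = ∑ i, (x i u * y i v + y i u * x i v) := by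
    intro u v
    by_cases huv : u = v
    · subst huv
      have hz : ∀ i ∈ Finset.univ (α := Fin m), x i u * y i u + y i u * x i u = 0 := by
        intro i _
        rw [mul_comm (y i u), hxy0, add_zero]
      rw [Finset.sum_congr rfl hz, Finset.sum_const_zero, hAdef]
      simp
    · have hterm : ∀ i ∈ Finset.univ (α := Fin m), x i u * y i v + y i u * x i v
          = if ((u ∈ (f i).1 ∧ v ∈ (f i).2) ∨ (u ∈ (f i).2 ∧ v ∈ (f i).1)) then 1 else 0 := by
        intro i _
        have hu : ¬ (u ∈ (f i).1 ∧ u ∈ (f i).2) := fun h =>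
          Finset.disjoint_left.mp (hdisj i) h.1 h.2
        exact aux_ite hu
      rw [Finset.sum_congr rfl hterm, Finset.sum_boole, ← coversCount_eq_card]
      by_cases hadj : G.Adj u v
      · rw [hAdef]
        simp only [SimpleGraph.adjMatrix_apply, if_pos hadj]
        exact (zmod2_odd ((hcov u v huv).mp hadj)).symm
      · rw [hAdef]
        simp only [SimpleGraph.adjMatrix_apply, if_neg hadj]
        have hno : ¬ Odd (coversCount f u v) := fun h => hadj ((hcov u v huv).mpr h)
        exact (zmod2_even (Nat.not_odd_iff_even.mp hno)).symm
  -- the action of A on vectors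
  have hmul : ∀ vec : V → ZMod 2,
      A *ᵥ vec = ∑ i, ((y i ⬝ᵥ vec) • x i + (x i ⬝ᵥ vec) • y i) := by
    intro vec
    funext v
    simp only [Matrix.mulVec, dotProduct, hA', Finset.sum_apply, Pi.add_apply,
      Pi.smul_apply, smul_eq_mul, Finset.sum_mul]
    rw [Finset.sum_comm]
    refine Finset.sum_congr rfl fun i _ => ?_
    rw [← Finset.sum_add_distrib]
    refine Finset.sum_congr rfl fun t _ => ?_
    ring
  set g : Fin m ⊕ Fin m → V → ZMod 2 := Sum.elim x y with hg
  have hrange : LinearMap.range A.mulVecLin ≤ Submodule.span (ZMod 2) (Set.range g) := by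
    rintro _ ⟨vec, rfl⟩
    rw [Matrix.mulVecLin_apply, hmul]
    refine Submodule.sum_mem _ fun i _ => Submodule.add_mem _ ?_ ?_
    · exact Submodule.smul_mem _ _ (Submodule.subset_span ⟨Sum.inl i, rfl⟩)
    · exact Submodule.smul_mem _ _ (Submodule.subset_span ⟨Sum.inr i, rfl⟩)
  have hspan_le : Module.finrank (ZMod 2) (Submodule.span (ZMod 2) (Set.range g)) ≤ 2 * m := by
    have h := finrank_range_le_card (R := ZMod 2) g
    rw [Set.finrank] at h
    simpa [Fintype.card_sum, two_mul] using h
  have hrank_le : A.rank ≤ 2 * m := by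
    rw [Matrix.rank]
    exact le_trans (Submodule.finrank_mono hrange) hspan_le
  by_contra hlt
  push_neg at hlt
  have hrank : A.rank = 2 * m := le_antisymm hrank_le (by omega)
  have hspan : Module.finrank (ZMod 2) (Submodule.span (ZMod 2) (Set.range g)) = 2 * m := by
    refine le_antisymm hspan_le ?_
    rw [← hrank, Matrix.rank]
    exact Submodule.finrank_mono hrange
  have hli : LinearIndependent (ZMod 2) g := by
    rw [linearIndependent_iff_card_eq_finrank_span, Set.finrank, hspan]
    simp [Fintype.card_sum, two_mul]
  -- the even core gives a kernel vector
  have hAw : A *ᵥ w = 0 := by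
    funext v
    show (A *ᵥ w) v = 0
    rw [hAdef, SimpleGraph.adjMatrix_mulVec_apply]
    have h1 : ∑ u ∈ G.neighborFinset v, w u
        = (((G.neighborFinset v).filter (· ∈ W)).card : ZMod 2) := by
      rw [← Finset.sum_boole]
      rfl
    have h2 : (G.neighborFinset v).filter (· ∈ W)
        = Finset.univ.filter (fun u => u ∈ W ∧ G.Adj v u) := by
      ext u
      simp [SimpleGraph.mem_neighborFinset, and_comm]
    have h3 : Nat.card {w : V // w ∈ W ∧ G.Adj v w}
        = (Finset.univ.filter (fun u => u ∈ W ∧ G.Adj v u)).card := by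
      rw [Nat.card_eq_fintype_card, Fintype.card_subtype]
    rw [h1, h2, ← h3]
    exact zmod2_even (hcore v)
  -- hence all the dot products with w vanish
  have hsum : ∑ j : Fin m ⊕ Fin m,
      (Sum.elim (fun i => y i ⬝ᵥ w) (fun i => x i ⬝ᵥ w) j) • g j = 0 := by
    rw [Fintype.sum_sum_type]
    simp only [Sum.elim_inl, Sum.elim_inr, hg]
    rw [← Finset.sum_add_distrib, ← hmul w, hAw]
  have hcoef := Fintype.linearIndependent_iff.mp hli _ hsum
  have hxw : ∀ i, x i ⬝ᵥ w = 0 := fun i => hcoef (Sum.inr i)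
  -- now count the edges inside W mod 2 in two ways
  letI : LinearOrder V := LinearOrder.lift' (fun v => ((Fintype.equivFin V) v : Fin _))
    (Fintype.equivFin V).injective
  set n : V → V → ℕ := fun u v =>
    (Finset.univ.filter (fun i => u ∈ (f i).1 ∧ v ∈ (f i).2)).card with hn
  have hn_diag : ∀ u, n u u = 0 := by
    intro u
    simp only [hn, Finset.card_eq_zero, Finset.filter_eq_empty_iff]
    intro i _ h
    exact Finset.disjoint_left.mp (hdisj i) h.1 h.2
  have hn_cc : ∀ u v : V, coversCount f u v = n u v + n v u := by
    intro u v
    have hd : Disjoint (Finset.univ.filter (fun i => u ∈ (f i).1 ∧ v ∈ (f i).2))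
        (Finset.univ.filter (fun i => u ∈ (f i).2 ∧ v ∈ (f i).1)) := by
      rw [Finset.disjoint_left]
      rintro i hi1 hi2
      simp only [Finset.mem_filter] at hi1 hi2
      exact Finset.disjoint_left.mp (hdisj i) hi1.2.1 hi2.2.1
    rw [coversCount_eq_card, Finset.filter_or, Finset.card_union_of_disjoint hd]
    simp only [hn]
    congr 1
    apply congrArg Finset.card
    apply Finset.filter_congr
    intro i _
    exact and_comm
  set S : Finset (V × V) := W ×ˢ W with hS
  set P : Finset (V × V) := S.filter (fun p => p.1 < p.2) with hP
  -- the number of edges inside W, as a finset of ordered pairs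
  have hN : Nat.card {e : Sym2 V // e ∈ G.edgeSet ∧ ∀ v ∈ e, v ∈ W}
      = (P.filter (fun p => G.Adj p.1 p.2)).card := by
    rw [Nat.card_eq_fintype_card, Fintype.card_subtype]
    refine (Finset.card_bij (fun p _ => Sym2.mk p.1 p.2) ?_ ?_ ?_).symm
    · rintro ⟨a, b⟩ hab
      simp only [hP, hS, Finset.mem_filter, Finset.mem_product] at hab
      simp only [Finset.mem_filter, Finset.mem_univ, true_and, SimpleGraph.mem_edgeSet]
      refine ⟨hab.2, ?_⟩
      intro v hv
      rcases Sym2.mem_iff.mp hv with rfl | rfl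
      · exact hab.1.1.1
      · exact hab.1.1.2
    · rintro ⟨a, b⟩ hab ⟨c, d⟩ hcd h
      simp only [hP, hS, Finset.mem_filter, Finset.mem_product] at hab hcd
      rcases Sym2.mk_eq_mk_iff.mp h with h' | h'
      · exact h'
      · rw [Prod.ext_iff] at h'
        exfalso
        have hcon : a < a := by
          calc a < b := hab.1.2
            _ = c := h'.2
            _ < d := hcd.1.2
            _ = a := h'.1.symm
        exact lt_irrefl a hcon
    · intro e
      induction e using Sym2.ind with
      | _ a b =>
        intro he
        simp only [Finset.mem_filter, Finset.mem_univ, true_and] at he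
        have hadj : G.Adj a b := G.mem_edgeSet.mp he.1
        have haW : a ∈ W := he.2 a (Sym2.mem_mk_left a b)
        have hbW : b ∈ W := he.2 b (Sym2.mem_mk_right a b)
        rcases lt_or_gt_of_ne (G.ne_of_adj hadj) with h | h
        · exact ⟨(a, b), by simp [hP, hS, Finset.mem_filter, Finset.mem_product,
            haW, hbW, h, hadj], rfl⟩
        · exact ⟨(b, a), by simp [hP, hS, Finset.mem_filter, Finset.mem_product,
            haW, hbW, h, hadj.symm], Sym2.eq_swap⟩
  -- ℕ-level splitting of the double sum over W × W
  have hsplit : ∑ p ∈ S, n p.1 p.2 = ∑ p ∈ P, (n p.1 p.2 + n p.2 p.1) := by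
    rw [← Finset.sum_filter_add_sum_filter_not S (fun p => p.1 < p.2) (fun p => n p.1 p.2)]
    rw [← Finset.sum_filter_add_sum_filter_not (S.filter (fun p => ¬ p.1 < p.2))
      (fun p => p.2 < p.1) (fun p => n p.1 p.2)]
    have hdiag0 : ∑ p ∈ (S.filter (fun p => ¬ p.1 < p.2)).filter (fun p => ¬ p.2 < p.1),
        n p.1 p.2 = 0 := by
      refine Finset.sum_eq_zero ?_
      rintro ⟨a, b⟩ hab
      simp only [Finset.mem_filter] at hab
      have hab' : a = b := le_antisymm (not_lt.mp hab.2) (not_lt.mp hab.1.2)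
      subst hab'
      exact hn_diag a
    have hswap : ∑ p ∈ (S.filter (fun p => ¬ p.1 < p.2)).filter (fun p => p.2 < p.1),
        n p.1 p.2 = ∑ p ∈ P, n p.2 p.1 := by
      refine Finset.sum_nbij' Prod.swap Prod.swap ?_ ?_ ?_ ?_ ?_
      · rintro ⟨a, b⟩ hab
        simp only [Finset.mem_filter, hP, hS, Finset.mem_product] at hab ⊢
        exact ⟨⟨hab.1.1.2, hab.1.1.1⟩, hab.2⟩
      · rintro ⟨a, b⟩ hab
        simp only [Finset.mem_filter, hP, hS, Finset.mem_product] at hab ⊢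
        exact ⟨⟨⟨hab.1.2, hab.1.1⟩, not_lt.mpr (le_of_lt hab.2)⟩, hab.2⟩
      · rintro ⟨a, b⟩ _; rfl
      · rintro ⟨a, b⟩ _; rfl
      · rintro ⟨a, b⟩ _; rfl
    rw [hdiag0, hswap, add_zero, ← Finset.sum_add_distrib]
  -- identify the mod-2 count of edges within W with the biclique double count
  have hcast1 : ((Nat.card {e : Sym2 V // e ∈ G.edgeSet ∧ ∀ v ∈ e, v ∈ W} : ℕ) : ZMod 2)
      = ∑ p ∈ S, ((n p.1 p.2 : ℕ) : ZMod 2) := by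
    rw [hN]
    rw [show ((P.filter (fun p => G.Adj p.1 p.2)).card : ZMod 2)
        = ∑ p ∈ P, (if G.Adj p.1 p.2 then (1 : ZMod 2) else 0) from (Finset.sum_boole _ _).symm]
    have step1 : ∀ p ∈ P, (if G.Adj p.1 p.2 then (1 : ZMod 2) else 0)
        = ((coversCount f p.1 p.2 : ℕ) : ZMod 2) := by
      rintro ⟨a, b⟩ hab
      simp only [hP, Finset.mem_filter] at hab
      have hne : a ≠ b := ne_of_lt hab.2
      by_cases hadj : G.Adj a b
      · rw [if_pos hadj, zmod2_odd ((hcov a b hne).mp hadj)]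
      · rw [if_neg hadj]
        have hno : ¬ Odd (coversCount f a b) := fun h => hadj ((hcov a b hne).mpr h)
        rw [zmod2_even (Nat.not_odd_iff_even.mp hno)]
    rw [Finset.sum_congr rfl step1,
      Finset.sum_congr rfl (fun p (_ : p ∈ P) => by rw [hn_cc p.1 p.2]),
      ← Nat.cast_sum, ← hsplit, Nat.cast_sum]
  -- and with the sum of products of the dot products
  have hcast2 : ∑ p ∈ S, ((n p.1 p.2 : ℕ) : ZMod 2) = ∑ i, (x i ⬝ᵥ w) * (y i ⬝ᵥ w) := by
    have hxdot : ∀ i, x i ⬝ᵥ w = ∑ u ∈ W, x i u := by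
      intro i
      rw [dotProduct,
        Finset.sum_congr rfl (fun u (_ : u ∈ Finset.univ) => by
          show x i u * w u = if u ∈ W then x i u else 0
          by_cases h : u ∈ W <;> simp [hw, indF, h]),
        Finset.sum_ite_mem, Finset.univ_inter]
    have hydot : ∀ i, y i ⬝ᵥ w = ∑ v ∈ W, y i v := by
      intro i
      rw [dotProduct,
        Finset.sum_congr rfl (fun u (_ : u ∈ Finset.univ) => by
          show y i u * w u = if u ∈ W then y i u else 0
          by_cases h : u ∈ W <;> simp [hw, indF, h]),
        Finset.sum_ite_mem, Finset.univ_inter]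
    have hnp : ∀ u v : V, ((n u v : ℕ) : ZMod 2) = ∑ i, x i u * y i v := by
      intro u v
      simp only [hn]
      rw [← Finset.sum_boole]
      refine Finset.sum_congr rfl fun i _ => ?_
      by_cases h1 : u ∈ (f i).1 <;> by_cases h2 : v ∈ (f i).2 <;>
        simp [hx, hy, indF, h1, h2]
    rw [Finset.sum_congr rfl (fun p (_ : p ∈ S) => hnp p.1 p.2), Finset.sum_comm]
    refine Finset.sum_congr rfl fun i _ => ?_
    rw [hxdot, hydot, Finset.sum_mul_sum, hS, Finset.sum_product]
  have hfinal : (1 : ZMod 2) = 0 := by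
    rw [← zmod2_odd hodd, hcast1, hcast2,
      Finset.sum_congr rfl (fun i (_ : i ∈ Finset.univ) => by rw [hxw i, zero_mul])]
    exact Finset.sum_const_zero
  exact one_ne_zero hfinal

/-- If `G` has an even core `W` (a nonempty set of vertices such that every
vertex of `G` has an even number of neighbors in `W`) inducing an odd number of edges, then
`b₂(G) ≥ r₂(G)/2 + 1`. -/
theorem stmt2 {V : Type*} [Fintype V] (G : SimpleGraph V) (W : Finset V)
    (hW : W.Nonempty)
    (hcore : ∀ v : V, Even (Nat.card {w : V // w ∈ W ∧ G.Adj v w}))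
    (hodd : Odd (Nat.card {e : Sym2 V // e ∈ G.edgeSet ∧ ∀ v ∈ e, v ∈ W})) :
    r2 G / 2 + 1 ≤ b2 G := by
  letI := Classical.decEq V
  letI := Classical.decRel G.Adj
  have hne : {m : ℕ | ∃ f : Fin m → Finset V × Finset V, IsOddCover G f}.Nonempty := by
    obtain ⟨m, f, hf⟩ := exists_oddCover G
    exact ⟨m, f, hf⟩
  refine le_csInf hne ?_
  rintro m ⟨f, hf⟩
  have hk := key_lemma G W hcore hodd f hf
  have hr : r2 G = (SimpleGraph.adjMatrix (ZMod 2) G).rank := rfl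
  omega
end

section
/- Let G be a finite simple graph and let O be a perfect odd cover of G, i.e., an odd cover of G of cardinality r_2(G)/2. Then a nonempty subset W of V(G) is an even core in G if and only if, for every biclique (X, Y) in O, both |W ∩ X| and |W ∩ Y| are even. -/
open Finset

section Stmt3Aux
open Matrix
variable {V : Type*} [Fintype V] [DecidableEq V]

noncomputable def chiF (S : Finset V) : V → ZMod 2 := fun v => if v ∈ S then 1 else 0

lemma even_iff_castZ (n : ℕ) : Even n ↔ (n : ZMod 2) = 0 := by
  rw [ZMod.natCast_eq_zero_iff]
  exact even_iff_two_dvd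

lemma odd_iff_castZ (n : ℕ) : Odd n ↔ (n : ZMod 2) = 1 := by
  rw [← Nat.not_even_iff_odd, even_iff_castZ]
  have : ∀ x : ZMod 2, ¬ x = 0 ↔ x = 1 := by decide
  exact this n

lemma chiF_dot (S T : Finset V) : chiF S ⬝ᵥ chiF T = ((S ∩ T).card : ZMod 2) := by
  have h : ∀ v : V, chiF S v * chiF T v = if v ∈ S ∩ T then 1 else 0 := by
    intro v; by_cases h1 : v ∈ S <;> by_cases h2 : v ∈ T <;> simp [chiF, h1, h2]
  rw [dotProduct]
  simp_rw [h]
  rw [Finset.sum_boole]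
  have : filter (fun x => x ∈ S ∩ T) univ = S ∩ T := by ext v; simp
  rw [this]

end Stmt3Aux

open Matrix

/-- If `𝒪` is a perfect odd cover of `G` (an odd cover of cardinality
`r₂(G)/2`), then a nonempty subset `W` of the vertices is an even core of `G` iff `W` has even
intersection with both partite sets of every biclique of `𝒪`. -/
theorem stmt3 {V : Type*} [Fintype V] [DecidableEq V] (G : SimpleGraph V)
    (f : Fin (r2 G / 2) → Finset V × Finset V) (hf : IsOddCover G f)
    (W : Finset V) (hW : W.Nonempty) :
    (∀ v : V, Even (Nat.card {w : V // w ∈ W ∧ G.Adj v w})) ↔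
      (∀ i, Even ((W ∩ (f i).1).card) ∧ Even ((W ∩ (f i).2).card)) := by
  classical
  letI : DecidableRel G.Adj := Classical.decRel G.Adj
  set A : Matrix V V (ZMod 2) := SimpleGraph.adjMatrix (ZMod 2) G with hA
  have hrank : A.rank = r2 G := rfl
  set x : Fin (r2 G / 2) → V → ZMod 2 := fun i => chiF (f i).1 with hx
  set y : Fin (r2 G / 2) → V → ZMod 2 := fun i => chiF (f i).2 with hy
  set g : Fin (r2 G / 2) ⊕ Fin (r2 G / 2) → V → ZMod 2 := Sum.elim x y with hg
  set c : (V → ZMod 2) → Fin (r2 G / 2) ⊕ Fin (r2 G / 2) → ZMod 2 :=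
    fun w => Sum.elim (fun i => y i ⬝ᵥ w) (fun i => x i ⬝ᵥ w) with hc
  -- individual biclique terms
  have hterm : ∀ (i : Fin (r2 G / 2)) (u v : V),
      x i u * y i v + y i u * x i v =
        if (u ∈ (f i).1 ∧ v ∈ (f i).2) ∨ (u ∈ (f i).2 ∧ v ∈ (f i).1) then 1 else 0 := by
    intro i u v
    have hd := Finset.disjoint_left.mp (hf.1 i)
    by_cases h1 : u ∈ (f i).1 <;> by_cases h2 : u ∈ (f i).2 <;>
      by_cases h3 : v ∈ (f i).1 <;> by_cases h4 : v ∈ (f i).2 <;>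
      first
        | exact absurd h2 (hd h1)
        | exact absurd h4 (hd h3)
        | simp [hx, hy, chiF, h1, h2, h3, h4]
  -- the adjacency matrix is the sum of the biclique matrices
  have hAentry : ∀ u v : V, A u v = ∑ i : Fin (r2 G / 2), (x i u * y i v + y i u * x i v) := by
    intro u v
    simp_rw [hterm]
    rw [Finset.sum_boole]
    by_cases huv : u = v
    · subst huv
      have hnone : ∀ i : Fin (r2 G / 2),
          ¬((u ∈ (f i).1 ∧ u ∈ (f i).2) ∨ (u ∈ (f i).2 ∧ u ∈ (f i).1)) := by
        intro i h
        have hd := Finset.disjoint_left.mp (hf.1 i)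
        rcases h with ⟨ha, hb⟩ | ⟨ha, hb⟩
        · exact hd ha hb
        · exact hd hb ha
      have : filter (fun i : Fin (r2 G / 2) =>
          (u ∈ (f i).1 ∧ u ∈ (f i).2) ∨ (u ∈ (f i).2 ∧ u ∈ (f i).1)) univ = ∅ := by
        ext i; simp [hnone i]
      rw [this]
      simp [hA]
    · have hcard : coversCount f u v = (univ.filter (fun i : Fin (r2 G / 2) =>
          (u ∈ (f i).1 ∧ v ∈ (f i).2) ∨ (u ∈ (f i).2 ∧ v ∈ (f i).1))).card := by
        rw [coversCount, Nat.card_eq_fintype_card, Fintype.card_subtype]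
      rw [hA, SimpleGraph.adjMatrix_apply]
      by_cases hadj : G.Adj u v
      · have hodd := (hf.2 u v huv).mp hadj
        rw [hcard, odd_iff_castZ] at hodd
        rw [if_pos hadj, hodd]
      · have heven : Even (coversCount f u v) := by
          rw [← Nat.not_odd_iff_even]
          exact fun h => hadj ((hf.2 u v huv).mpr h)
        rw [hcard, even_iff_castZ] at heven
        rw [if_neg hadj, heven]
  -- mulVec decomposition
  have hmulVec : ∀ w : V → ZMod 2, A *ᵥ w = ∑ j : Fin (r2 G / 2) ⊕ Fin (r2 G / 2), c w j • g j := by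
    intro w
    funext u
    rw [mulVec, dotProduct]
    simp_rw [hAentry, Finset.sum_mul]
    rw [Finset.sum_comm]
    have lhs_eq : ∀ i : Fin (r2 G / 2),
        (∑ v : V, (x i u * y i v + y i u * x i v) * w v) =
          (y i ⬝ᵥ w) * x i u + (x i ⬝ᵥ w) * y i u := by
      intro i
      rw [dotProduct, dotProduct, Finset.sum_mul, Finset.sum_mul, ← Finset.sum_add_distrib]
      congr 1; funext v; ring
    simp_rw [lhs_eq]
    rw [Finset.sum_add_distrib]
    rw [Finset.sum_apply]
    rw [Fintype.sum_sum_type]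
    simp [hc, hg]
  -- rank bound gives linear independence
  have hle1 : LinearMap.range A.mulVecLin ≤ Submodule.span (ZMod 2) (Set.range g) := by
    rintro _ ⟨w, rfl⟩
    rw [mulVecLin_apply, hmulVec]
    exact Submodule.sum_mem _ fun j _ =>
      Submodule.smul_mem _ _ (Submodule.subset_span ⟨j, rfl⟩)
  have hle2 : (Set.range g).finrank (ZMod 2) ≤ Fintype.card (Fin (r2 G / 2) ⊕ Fin (r2 G / 2)) :=
    finrank_range_le_card g
  have hge : A.rank ≤ (Set.range g).finrank (ZMod 2) := Submodule.finrank_mono hle1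
  have hcard2 : Fintype.card (Fin (r2 G / 2) ⊕ Fin (r2 G / 2)) = 2 * (r2 G / 2) := by simp [two_mul]
  have h2m : 2 * (r2 G / 2) ≤ r2 G := by
    rw [mul_comm]
    exact Nat.div_mul_le_self (r2 G) 2
  have hind : LinearIndependent (ZMod 2) g := by
    rw [linearIndependent_iff_card_eq_finrank_span]
    rw [hrank] at hge
    omega
  -- even core iff A *ᵥ chiF W = 0
  have hcore : ∀ v : V,
      Even (Nat.card {w : V // w ∈ W ∧ G.Adj v w}) ↔ (A *ᵥ chiF W) v = 0 := by
    intro v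
    have hval : (A *ᵥ chiF W) v =
        ((univ.filter (fun w : V => w ∈ W ∧ G.Adj v w)).card : ZMod 2) := by
      rw [mulVec, dotProduct, ← Finset.sum_boole]
      apply Finset.sum_congr rfl
      intro w _
      by_cases h1 : w ∈ W <;> by_cases h2 : G.Adj v w <;>
        simp [hA, chiF, SimpleGraph.adjMatrix_apply, h1, h2]
    rw [hval, Nat.card_eq_fintype_card, Fintype.card_subtype, even_iff_castZ]
  -- coefficient correspondence
  have hcoef1 : ∀ i : Fin (r2 G / 2), (c (chiF W) (Sum.inr i) = 0) ↔ Even ((W ∩ (f i).1).card) := by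
    intro i
    rw [hc]
    simp only [Sum.elim_inr]
    rw [hx]
    simp only []
    rw [chiF_dot, even_iff_castZ, Finset.inter_comm]
  have hcoef2 : ∀ i : Fin (r2 G / 2), (c (chiF W) (Sum.inl i) = 0) ↔ Even ((W ∩ (f i).2).card) := by
    intro i
    rw [hc]
    simp only [Sum.elim_inl]
    rw [hy]
    simp only []
    rw [chiF_dot, even_iff_castZ, Finset.inter_comm]
  constructor
  · intro h
    have hzero : A *ᵥ chiF W = 0 := by
      funext v
      exact (hcore v).mp (h v)
    rw [hmulVec] at hzero
    have hc0 : ∀ j, c (chiF W) j = 0 := Fintype.linearIndependent_iff.mp hind _ hzero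
    intro i
    exact ⟨(hcoef1 i).mp (hc0 _), (hcoef2 i).mp (hc0 _)⟩
  · intro h v
    rw [hcore v, hmulVec]
    have hc0 : ∀ j, c (chiF W) j = 0 := by
      rintro (i | i)
      · exact (hcoef2 i).mpr (h i).2
      · exact (hcoef1 i).mpr (h i).1
    simp_rw [hc0]
    simp
end

section
/- Let G be a finite simple graph with r_2(G) = 2k that has a perfect odd cover {(X_1, Y_1), …, (X_k, Y_k)}. If B is a subset of V(G) such that the rows of the adjacency matrix A_G indexed by B form a basis of the row space of A_G over F_2 (so |B| = 2k and these rows are linearly independent), then B is a complete system of distinct representatives for the 2k partite sets X_1, Y_1, …, X_k, Y_k; that is, the elements of B can be enumerated as x_1, y_1, …, x_k, y_k with x_i ∈ X_i and y_i ∈ Y_i for all i ∈ {1, …, k}. -/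
open Finset Matrix

lemma natCast_zmod2_eq_one_iff_odd (n : ℕ) : ((n : ZMod 2) = 1) ↔ Odd n := by
  rw [Nat.odd_iff, ← ZMod.natCast_mod n 2]
  rcases Nat.mod_two_eq_zero_or_one n with h | h <;> simp [h]


/-- Let `G` have rank `2k` over `𝔽₂` and a perfect odd cover
`(X₁,Y₁),…,(X_k,Y_k)`. If the rows of the adjacency matrix indexed by `B ⊆ V(G)` form a basis
of its row space, then `B` is a complete system of distinct representatives for the partite
sets `X₁, Y₁, …, X_k, Y_k`. -/
theorem stmt4 {V : Type*} [Fintype V] (G : SimpleGraph V) [DecidableRel G.Adj]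
    (k : ℕ) (hk : r2 G = 2 * k)
    (f : Fin k → Finset V × Finset V) (hf : IsOddCover G f)
    (B : Finset V)
    (hind : LinearIndependent (ZMod 2)
      (fun b : B => SimpleGraph.adjMatrix (ZMod 2) G b.val))
    (hspan : Submodule.span (ZMod 2)
        (Set.range (fun b : B => SimpleGraph.adjMatrix (ZMod 2) G b.val)) =
      Submodule.span (ZMod 2) (Set.range (fun v : V => SimpleGraph.adjMatrix (ZMod 2) G v))) :
    ∃ x y : Fin k → V,
      (∀ i, x i ∈ (f i).1) ∧ (∀ i, y i ∈ (f i).2) ∧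
      Function.Injective (Sum.elim x y) ∧
      (B : Set V) = Set.range (Sum.elim x y) := by
  classical
  set A := SimpleGraph.adjMatrix (ZMod 2) G with hA
  -- the key identity: A = Σ_i (χ_{X_i} χ_{Y_i}ᵀ + χ_{Y_i} χ_{X_i}ᵀ) over 𝔽₂
  have key : ∀ u v : V, A u v = ∑ i : Fin k,
      ((if u ∈ (f i).1 then (1 : ZMod 2) else 0) * (if v ∈ (f i).2 then 1 else 0)
        + (if u ∈ (f i).2 then (1 : ZMod 2) else 0) * (if v ∈ (f i).1 then 1 else 0)) := by
    intro u v
    by_cases huv : u = v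
    · subst huv
      rw [hA, SimpleGraph.adjMatrix_apply, if_neg (G.loopless.irrefl u)]
      symm
      apply Finset.sum_eq_zero
      intro i _
      rw [mul_comm ((if u ∈ (f i).2 then (1 : ZMod 2) else 0))]
      exact CharTwo.add_self_eq_zero _
    · have hterm : ∀ i : Fin k,
          (if (u ∈ (f i).1 ∧ v ∈ (f i).2) ∨ (u ∈ (f i).2 ∧ v ∈ (f i).1) then (1 : ZMod 2) else 0)
          = (if u ∈ (f i).1 then (1 : ZMod 2) else 0) * (if v ∈ (f i).2 then 1 else 0)
            + (if u ∈ (f i).2 then (1 : ZMod 2) else 0) * (if v ∈ (f i).1 then 1 else 0) := by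
        intro i
        have hd := hf.1 i
        have h1 : ¬(u ∈ (f i).1 ∧ u ∈ (f i).2) :=
          fun h => Finset.disjoint_left.mp hd h.1 h.2
        have h2 : ¬(v ∈ (f i).1 ∧ v ∈ (f i).2) :=
          fun h => Finset.disjoint_left.mp hd h.1 h.2
        by_cases a : u ∈ (f i).1 <;> by_cases b : u ∈ (f i).2 <;>
          by_cases c : v ∈ (f i).1 <;> by_cases d : v ∈ (f i).2 <;> simp_all
      have hsum : ((coversCount f u v : ℕ) : ZMod 2) = ∑ i : Fin k,
          (if (u ∈ (f i).1 ∧ v ∈ (f i).2) ∨ (u ∈ (f i).2 ∧ v ∈ (f i).1) then (1 : ZMod 2)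
            else 0) := by
        rw [Finset.sum_boole]
        unfold coversCount
        rw [Nat.card_eq_fintype_card, Fintype.card_subtype]
      have hAv : A u v = ((coversCount f u v : ℕ) : ZMod 2) := by
        rw [hA, SimpleGraph.adjMatrix_apply]
        by_cases h : G.Adj u v
        · rw [if_pos h]
          exact ((natCast_zmod2_eq_one_iff_odd _).mpr ((hf.2 u v huv).mp h)).symm
        · rw [if_neg h]
          have hno : ¬ Odd (coversCount f u v) := fun ho => h ((hf.2 u v huv).mpr ho)
          rw [Nat.not_odd_iff] at hno
          rw [← ZMod.natCast_mod, hno, Nat.cast_zero]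
      rw [hAv, hsum]
      exact Finset.sum_congr rfl fun i _ => hterm i
  -- coefficient vectors and the "pattern" matrix
  set c : V → (Fin k ⊕ Fin k → ZMod 2) := fun u => Sum.elim
      (fun i => if u ∈ (f i).1 then 1 else 0) (fun i => if u ∈ (f i).2 then 1 else 0) with hc
  set W : Matrix (Fin k ⊕ Fin k) V (ZMod 2) := fun j v => Sum.elim
      (fun i => if v ∈ (f i).2 then (1 : ZMod 2) else 0)
      (fun i => if v ∈ (f i).1 then (1 : ZMod 2) else 0) j with hW
  have hrow : ∀ u : V, Wᵀ.mulVecLin (c u) = A u := by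
    intro u
    funext v
    rw [Matrix.mulVecLin_apply, Matrix.mulVec, key u v]
    show ∑ j : Fin k ⊕ Fin k, Wᵀ v j * c u j = _
    rw [Fintype.sum_sum_type, ← Finset.sum_add_distrib]
    apply Finset.sum_congr rfl
    intro i _
    simp only [hc, hW, Matrix.transpose_apply, Matrix.transpose, Matrix.of_apply, Sum.elim_inl, Sum.elim_inr]
    ring
  -- the coefficient vectors over B are linearly independent
  have hindc : LinearIndependent (ZMod 2) (fun b : B => c b.val) := by
    apply LinearIndependent.of_comp Wᵀ.mulVecLin
    have : (Wᵀ.mulVecLin ∘ fun b : B => c b.val) = fun b : B => A b.val := by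
      funext b; exact hrow b.val
    rw [this]
    exact hind
  -- cardinality of B is 2k
  have hcard1 : Fintype.card B ≤ 2 * k := by
    have h := hindc.fintype_card_le_finrank
    rwa [Module.finrank_fintype_fun_eq_card, Fintype.card_sum, Fintype.card_fin,
      ← two_mul] at h
  have hfr : Module.finrank (ZMod 2)
      (Submodule.span (ZMod 2) (Set.range fun b : B => A b.val)) = 2 * k := by
    rw [hspan]
    have h1 : A.rank = Module.finrank (ZMod 2)
        (Submodule.span (ZMod 2) (Set.range Aᵀ)) := Matrix.rank_eq_finrank_span_cols A
    have h2 : Aᵀ = A := by rw [hA]; simp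
    rw [h2] at h1
    have h3 : r2 G = A.rank := by
      unfold r2
      congr!
    rw [show (Set.range fun v : V => A v) = Set.range A from rfl, ← h1, ← h3, hk]
  have hcard2 : 2 * k ≤ Fintype.card B := by
    have h := finrank_range_le_card (R := ZMod 2) (fun b : B => A b.val)
    have h' : Module.finrank (ZMod 2)
        (Submodule.span (ZMod 2) (Set.range fun b : B => A b.val))
        ≤ Fintype.card B := h
    omega
  have hcardB : Fintype.card B = Fintype.card (Fin k ⊕ Fin k) := by
    rw [Fintype.card_sum, Fintype.card_fin, ← two_mul]; omega
  set e : B ≃ (Fin k ⊕ Fin k) := Fintype.equivOfCardEq hcardB with he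
  set M : Matrix (Fin k ⊕ Fin k) (Fin k ⊕ Fin k) (ZMod 2) :=
    fun j j' => c ((e.symm j : B) : V) j' with hM
  have hMrows : LinearIndependent (ZMod 2) (fun j => M j) :=
    hindc.comp e.symm e.symm.injective
  have hMunit : IsUnit M := Matrix.linearIndependent_rows_iff_isUnit.mp hMrows
  have hdet : M.det ≠ 0 := ((Matrix.isUnit_iff_isUnit_det M).mp hMunit).ne_zero
  have hexists : ∃ σ : Equiv.Perm (Fin k ⊕ Fin k), ∀ j, M (σ j) j ≠ 0 := by
    by_contra h
    push_neg at h
    apply hdet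
    rw [Matrix.det_apply]
    apply Finset.sum_eq_zero
    intro σ _
    obtain ⟨j, hj⟩ := h σ
    have hz : ∏ i : Fin k ⊕ Fin k, M (σ i) i = 0 :=
      Finset.prod_eq_zero (Finset.mem_univ j) hj
    rw [hz, smul_zero]
  obtain ⟨σ, hσ⟩ := hexists
  refine ⟨fun i => ((e.symm (σ (Sum.inl i)) : B) : V),
    fun i => ((e.symm (σ (Sum.inr i)) : B) : V), ?_, ?_, ?_, ?_⟩
  · intro i
    have h := hσ (Sum.inl i)
    by_contra hmem
    apply h
    simp [hM, hc, hmem]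
  · intro i
    have h := hσ (Sum.inr i)
    by_contra hmem
    apply h
    simp [hM, hc, hmem]
  · have heq : Sum.elim (fun i => ((e.symm (σ (Sum.inl i)) : B) : V))
        (fun i => ((e.symm (σ (Sum.inr i)) : B) : V))
        = fun j => ((e.symm (σ j) : B) : V) := by
      funext j; cases j <;> rfl
    rw [heq]
    exact Subtype.val_injective.comp (e.symm.injective.comp σ.injective)
  · have heq : Sum.elim (fun i => ((e.symm (σ (Sum.inl i)) : B) : V))
        (fun i => ((e.symm (σ (Sum.inr i)) : B) : V))
        = fun j => ((e.symm (σ j) : B) : V) := by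
      funext j; cases j <;> rfl
    rw [heq]
    ext v
    constructor
    · intro hv
      obtain ⟨j, hj⟩ := (σ.trans e.symm).surjective ⟨v, hv⟩
      exact ⟨j, congrArg Subtype.val hj⟩
    · rintro ⟨j, rfl⟩
      exact (e.symm (σ j)).2
end
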